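/- If an infinite binary word w is bounded weakly abelian periodic (WAP with blocks of uniformly bounded length), then w has bounded width. -/

import Mathlib

open Filter Topology

/-- Number of 1's (`true`) in the length-`n` prefix of the infinite binary word `w`. -/
def ones (w : ℕ → Bool) (n : ℕ) : ℕ :=
  ((Finset.range n).filter (fun i => w i = true)).card

/-- Number of 0's (`false`) in the length-`n` prefix of `w`. -/
def zeros (w : ℕ → Bool) (n : ℕ) : ℕ := n - ones w n

/-- The graphic of `w`: `g_w(n) = |pref_n(w)|₁ - |pref_n(w)|₀`. -/
def graphic (w : ℕ → Bool) (n : ℕ) : ℤ := (ones w n : ℤ) - (zeros w n : ℤ)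

/-- `w` is weakly abelian periodic with frequency `ρ` of the letter 1 in the blocks:
there is a factorization `w = v₀v₁v₂⋯` (cut points `k 0 < k 1 < ⋯`, with `v₀` the
prefix of length `k 0`) such that each block `vᵢ = w[k i, k (i+1))`, `i ≥ 1`,
has frequency `ρ` of the letter 1. -/
def WAPwith (w : ℕ → Bool) (ρ : ℚ) : Prop :=
  ∃ k : ℕ → ℕ, StrictMono k ∧
    ∀ i : ℕ, ((ones w (k (i+1)) : ℚ) - (ones w (k i) : ℚ))
      = ρ * ((k (i+1) : ℚ) - (k i : ℚ))

/-- `w` is weakly abelian periodic. -/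
def WAP (w : ℕ → Bool) : Prop := ∃ ρ : ℚ, WAPwith w ρ

/-- `w` is bounded weakly abelian periodic: WAP with blocks of uniformly bounded length. -/
def BoundedWAP (w : ℕ → Bool) : Prop :=
  ∃ (ρ : ℚ) (k : ℕ → ℕ) (C : ℕ), StrictMono k ∧ (∀ i, k (i+1) - k i ≤ C) ∧
    ∀ i : ℕ, ((ones w (k (i+1)) : ℚ) - (ones w (k i) : ℚ))
      = ρ * ((k (i+1) : ℚ) - (k i : ℚ))

/-- `w` has bounded width: its graphic lies between two parallel lines with
rational coefficients. -/
def BoundedWidth (w : ℕ → Bool) : Prop :=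
  ∃ a b₁ b₂ : ℚ, ∀ n : ℕ,
    a * n + b₁ ≤ (graphic w n : ℚ) ∧ (graphic w n : ℚ) ≤ a * n + b₂

/-- If an infinite binary word is bounded weakly abelian periodic, then it has
bounded width. -/
lemma ones_le (w : ℕ → Bool) (n : ℕ) : ones w n ≤ n := by
  have := Finset.card_filter_le (Finset.range n) (fun i => w i = true)
  simpa [ones] using this

lemma ones_mono (w : ℕ → Bool) {m n : ℕ} (h : m ≤ n) : ones w m ≤ ones w n :=
  Finset.card_le_card (Finset.filter_subset_filter _ (Finset.range_subset_range.mpr h))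

lemma ones_add_le (w : ℕ → Bool) {m n : ℕ} (h : m ≤ n) :
    ones w n ≤ ones w m + (n - m) := by
  have hun : Finset.range n = Finset.range m ∪ Finset.Ico m n := by
    rw [Finset.range_eq_Ico, Finset.range_eq_Ico]
    exact (Finset.Ico_union_Ico_eq_Ico (Nat.zero_le m) h).symm
  calc ones w n = ((Finset.range m ∪ Finset.Ico m n).filter (fun i => w i = true)).card := by
        rw [ones, hun]
    _ ≤ ((Finset.range m).filter (fun i => w i = true)).card
        + ((Finset.Ico m n).filter (fun i => w i = true)).card := by
        rw [Finset.filter_union]; exact Finset.card_union_le _ _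
    _ ≤ ones w m + (n - m) := by
        refine Nat.add_le_add le_rfl ?_
        have := Finset.card_filter_le (Finset.Ico m n) (fun i => w i = true)
        simpa [Nat.card_Ico] using this

lemma graphicQ (w : ℕ → Bool) (n : ℕ) :
    (graphic w n : ℚ) = 2 * (ones w n : ℚ) - n := by
  have h := ones_le w n
  simp only [graphic, zeros]
  push_cast [h]
  ring

theorem boundedWAP_imp_boundedWidth (w : ℕ → Bool) (h : BoundedWAP w) :
    BoundedWidth w := by
  obtain ⟨ρ, k, C, hk, hC, hfreq⟩ := h
  set a : ℚ := 2 * ρ - 1 with ha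
  set f : ℕ → ℚ := fun n => (graphic w n : ℚ) - a * n with hf
  -- f is constant on cut points
  have hfk : ∀ i, f (k i) = f (k 0) := by
    intro i
    induction i with
    | zero => rfl
    | succ i ih =>
      rw [← ih]
      have h1 := hfreq i
      simp only [hf, graphicQ, ha]
      linear_combination (2 : ℚ) * h1
  -- Lipschitz-type bound for f
  have key : ∀ m n : ℕ, m ≤ n → |f n - f m| ≤ (1 + |a|) * ((n : ℚ) - m) := by
    intro m n hmn
    have h1 : (ones w m : ℚ) ≤ ones w n := by exact_mod_cast ones_mono w hmn
    have h2 : (ones w n : ℚ) ≤ ones w m + ((n : ℚ) - m) := by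
      have := ones_add_le w hmn
      have hcast : ((n - m : ℕ) : ℚ) = (n : ℚ) - m := by push_cast [hmn]; ring
      calc (ones w n : ℚ) ≤ ((ones w m + (n - m) : ℕ) : ℚ) := by exact_mod_cast this
        _ = ones w m + ((n : ℚ) - m) := by push_cast [hmn]; ring
    have hg : |(graphic w n : ℚ) - graphic w m| ≤ (n : ℚ) - m := by
      rw [graphicQ, graphicQ, abs_le]
      constructor <;> linarith
    have haa : |a * n - a * m| ≤ |a| * ((n : ℚ) - m) := by
      rw [← mul_sub, abs_mul]
      have : |(n : ℚ) - m| = (n : ℚ) - m := by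
        rw [abs_of_nonneg]; have : (m : ℚ) ≤ n := by exact_mod_cast hmn
        linarith
      rw [this]
    calc |f n - f m| = |((graphic w n : ℚ) - graphic w m) - (a * n - a * m)| := by
          simp only [hf]; ring_nf
      _ ≤ |(graphic w n : ℚ) - graphic w m| + |a * n - a * m| := abs_sub _ _
      _ ≤ (1 + |a|) * ((n : ℚ) - m) := by linarith
  have hf0 : f 0 = 0 := by simp [hf, graphic, ones, zeros]
  have hnn : (0 : ℚ) ≤ 1 + |a| := by positivity
  set B : ℚ := (1 + |a|) * ((k 0 : ℚ) + C) with hB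
  have hfk0 : |f (k 0)| ≤ (1 + |a|) * (k 0 : ℚ) := by
    have := key 0 (k 0) (Nat.zero_le _)
    simpa [hf0] using this
  refine ⟨a, -B, B, fun n => ?_⟩
  have hbound : |f n| ≤ B := by
    rcases le_or_gt (k 0) n with hn | hn
    · -- find i with k i ≤ n < k (i+1)
      have hex : ∃ j, n < k j := ⟨n + 1, lt_of_lt_of_le (Nat.lt_succ_self n) (hk.le_apply)⟩
      set j := Nat.find hex with hj
      have hjpos : j ≠ 0 := by
        intro h0
        have := Nat.find_spec hex
        rw [← hj, h0] at this
        omega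
      obtain ⟨i, hi⟩ := Nat.exists_eq_succ_of_ne_zero hjpos
      have hlt : n < k (i + 1) := by
        have := Nat.find_spec hex; rwa [← hj, hi] at this
      have hge : k i ≤ n := by
        have := Nat.find_min hex (m := i) (by omega)
        omega
      have hgap : n - k i ≤ C := by
        have := hC i; omega
      have h1 : |f n - f (k i)| ≤ (1 + |a|) * (C : ℚ) := by
        have := key (k i) n hge
        have hle2 : (n : ℚ) - k i ≤ C := by
          have : (n : ℚ) - k i ≤ ((n - k i : ℕ) : ℚ) := by push_cast [hge]; ring_nf; simp
          calc (n : ℚ) - k i ≤ ((n - k i : ℕ) : ℚ) := this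
            _ ≤ C := by exact_mod_cast hgap
        calc |f n - f (k i)| ≤ (1 + |a|) * ((n : ℚ) - k i) := key (k i) n hge
          _ ≤ (1 + |a|) * C := by
            exact mul_le_mul_of_nonneg_left hle2 hnn
      rw [hfk i] at h1
      calc |f n| = |(f n - f (k 0)) + f (k 0)| := by ring_nf
        _ ≤ |f n - f (k 0)| + |f (k 0)| := abs_add_le _ _
        _ ≤ (1 + |a|) * C + (1 + |a|) * (k 0 : ℚ) := by linarith [h1, hfk0]
        _ = B := by rw [hB]; ring
    · have h1 := key 0 n (Nat.zero_le n)
      rw [hf0, sub_zero] at h1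
      have h2 : (n : ℚ) ≤ (k 0 : ℚ) := by exact_mod_cast hn.le
      have hCnn : (0 : ℚ) ≤ (C : ℚ) := Nat.cast_nonneg C
      have hnq : (0 : ℚ) ≤ (n : ℚ) := Nat.cast_nonneg n
      rw [hB]
      nlinarith [abs_nonneg (f n)]
  have habs := abs_le.mp hbound
  have hfn : f n = (graphic w n : ℚ) - a * n := rfl
  constructor <;> [linarith [habs.1]; linarith [habs.2]]
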